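/- Let β > 0 and let (q_j)_{j≥1} be nonnegative weights with Σ_{j=1}^∞ q_j = 1, and set F(x) = Σ_{j=1}^∞ q_j H(x; j, β) for x ≥ 0 (a mixed Erlang cdf). Let Q_0 = 0 and Q_n = Σ_{m=1}^n q_m for n ≥ 1. Define, for j ≥ 1, q_{j,[1]} = 2^{−(j−1)} Σ_{m=0}^{j−1} C(j−1, m) q_{m+1} (1 − Q_{j−1−m}) and q_{j,[2]} = 2^{−(j−1)} Σ_{m=0}^{j−1} C(j−1, m) q_{m+1} Q_{j−1−m}, where C(n,m) is the binomial coefficient. Then for all x ≥ 0: 1 − (1 − F(x))^2 = Σ_{j=1}^∞ q_{j,[1]} H(x; j, 2β) and F(x)^2 = Σ_{j=1}^∞ q_{j,[2]} H(x; j, 2β). In particular the minimum and maximum of two iid mixed Erlang rvs with rate β are mixed Erlang with rate 2β. -/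

import Mathlib

open MeasureTheory Finset Filter Topology

/-- The cdf `H(x; j, b)` of an Erlang distribution with integer shape `j ≥ 1` and
rate `b > 0`: `H(x; j, b) = ∫_0^x b^j t^{j−1} e^{−bt}/(j−1)! dt`. -/
noncomputable def erlangCDF (x : ℝ) (j : ℕ) (b : ℝ) : ℝ :=
  ∫ t in (0 : ℝ)..x, b ^ j * t ^ (j - 1) * Real.exp (-b * t) / (Nat.factorial (j - 1))

/-- formula (4.7), closure of mixed Erlang distributions under order
statistics: if `F = Σ_{j≥1} q_j H(·; j, β)` is a mixed Erlang cdf, then the cdfs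
`1 − (1 − F)²` and `F²` of the minimum and the maximum of two iid rvs with cdf `F`
are mixed Erlang cdfs with rate `2β` and the displayed weights. (Weights are indexed by
`ℕ`, with the convention `q 0 = 0` so that the effective weights are `q 1, q 2, …`.) -/

lemma erlang_deriv (b : ℝ) (j : ℕ) (y : ℝ) :
    HasDerivAt (fun z => 1 - Real.exp (-b*z) * ∑ i ∈ range (j+1), (b*z)^i / i.factorial)
      (b^(j+1) * y^j * Real.exp (-b*y) / (Nat.factorial j)) y := by
  induction j with
  | zero =>
      have h : HasDerivAt (fun z : ℝ => -b*z) (-b) y := by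
        simpa using (hasDerivAt_id y).const_mul (-b)
      have h2 := h.exp
      have h3 : HasDerivAt (fun z => 1 - Real.exp (-b*z) * ∑ i ∈ range 1, (b*z)^i / i.factorial)
          (-(Real.exp (-b*y) * (-b))) y := by
        simpa using (h2.const_mul (1:ℝ)).const_sub 1
      convert h3 using 1
      simp; ring
  | succ j ih =>
      have h : HasDerivAt (fun z : ℝ => -b*z) (-b) y := by
        simpa using (hasDerivAt_id y).const_mul (-b)
      have hexp := h.exp
      have hpow : HasDerivAt (fun z : ℝ => (b*z)^(j+1)) ((j+1 : ℕ) * (b*y)^j * b) y := by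
        have := ((hasDerivAt_id y).const_mul b).fun_pow (j+1)
        simpa using this
      have hprod := (hexp.fun_mul hpow).div_const ((j+1).factorial : ℝ)
      have hfull := ih.fun_sub hprod
      have heq : (fun z => (1 - Real.exp (-b*z) * ∑ i ∈ range (j+1), (b*z)^i / i.factorial)
            - Real.exp (-b*z) * (b*z)^(j+1) / ((j+1).factorial : ℝ))
          = fun z => 1 - Real.exp (-b*z) * ∑ i ∈ range (j+1+1), (b*z)^i / i.factorial := by
        funext z
        conv_rhs => rw [Finset.sum_range_succ]
        ring
      rw [heq] at hfull
      convert hfull using 1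
      · rfl
      · rfl
      have hfj : (Nat.factorial j : ℝ) ≠ 0 := by positivity
      have hfj1 : ((j+1).factorial : ℝ) ≠ 0 := by positivity
      have hcast : ((j+1).factorial : ℝ) = (j+1) * (Nat.factorial j) := by
        rw [Nat.factorial_succ]; push_cast; ring
      rw [hcast]; push_cast
      field_simp
      ring

lemma erlangCDF_eq (b : ℝ) (x : ℝ) (j : ℕ) :
    erlangCDF x (j+1) b = 1 - Real.exp (-(b*x)) * ∑ i ∈ range (j+1), (b*x)^i / i.factorial := by
  have hcont : Continuous fun t : ℝ => b ^ (j+1) * t ^ ((j+1) - 1) * Real.exp (-b * t) / (Nat.factorial ((j+1) - 1)) := by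
    fun_prop
  have := intervalIntegral.integral_eq_sub_of_hasDerivAt
    (f := fun z => 1 - Real.exp (-b*z) * ∑ i ∈ range (j+1), (b*z)^i / i.factorial)
    (f' := fun t => b ^ (j+1) * t ^ ((j+1) - 1) * Real.exp (-b * t) / (Nat.factorial ((j+1) - 1)))
    (a := 0) (b := x)
    (fun t _ => by simpa using erlang_deriv b j t)
    (hcont.intervalIntegrable 0 x)
  rw [erlangCDF, this]
  have h0 : ∑ i ∈ range (j+1), (0:ℝ)^i / i.factorial = 1 := by
    rw [Finset.sum_eq_single 0]
    · simp
    · intro i _ hi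
      rw [zero_pow hi, zero_div]
    · simp
  simp [h0, neg_mul]

lemma exp_tsum (y : ℝ) : ∑' n : ℕ, y^n / n.factorial = Real.exp y := by
  rw [Real.exp_eq_exp_ℝ, NormedSpace.exp_eq_tsum_div]

lemma mixed_tsum (b x : ℝ) (hb : 0 ≤ b) (hx : 0 ≤ x) (w : ℕ → ℝ) (hw0 : w 0 = 0)
    (hwnn : ∀ j, 0 ≤ w j) (hwsum : Summable w) (hw1 : ∑' j, w j = 1) :
    ∑' j, w j * erlangCDF x j b
      = 1 - Real.exp (-(b*x)) * ∑' i : ℕ, ((b*x)^i / i.factorial) * (1 - ∑ m ∈ range (i+1), w m) := by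
  set c : ℕ → ℝ := fun i => (b*x)^i / i.factorial with hc_def
  have hbx : 0 ≤ b * x := mul_nonneg hb hx
  have hc : Summable c := Real.summable_pow_div_factorial (b*x)
  have hcnn : ∀ i, 0 ≤ c i := fun i => by
    simp only [hc_def]; positivity
  have htsc : ∑' i, c i = Real.exp (b*x) := exp_tsum (b*x)
  have hpart : ∀ j, ∑ i ∈ range j, c i ≤ Real.exp (b*x) := fun j => by
    rw [← htsc]; exact Summable.sum_le_tsum (range j) (fun i _ => hcnn i) hc
  have hite_summ : ∀ i : ℕ, Summable (fun j => if i < j then w j else 0) := by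
    intro i
    refine Summable.of_nonneg_of_le (fun j => ?_) (fun j => ?_) hwsum
    · split <;> simp [hwnn]
    · split <;> simp [hwnn]
  have hite : ∀ i : ℕ, ∑' j, (if i < j then w j else 0) = 1 - ∑ m ∈ range (i+1), w m := by
    intro i
    have h1 := Summable.sum_add_tsum_nat_add (i+1) (hite_summ i)
    have h2 := Summable.sum_add_tsum_nat_add (i+1) hwsum
    rw [hw1] at h2
    have h3 : ∑ j ∈ range (i+1), (if i < j then w j else 0) = 0 := by
      apply Finset.sum_eq_zero
      intro j hj
      rw [Finset.mem_range] at hj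
      rw [if_neg (by omega)]
    have h4 : (fun j => if i < j + (i+1) then w (j + (i+1)) else 0) = fun j => w (j + (i+1)) := by
      funext j; rw [if_pos (by omega)]
    rw [h3, h4, zero_add] at h1
    rw [← h1]
    linarith
  have hterm : ∀ j, w j * erlangCDF x j b
      = w j - Real.exp (-(b*x)) * (w j * ∑ i ∈ range j, c i) := by
    intro j
    cases j with
    | zero => simp [hw0]
    | succ j => rw [erlangCDF_eq]; ring
  have hgnn : ∀ j, 0 ≤ w j * ∑ i ∈ range j, c i := fun j =>
    mul_nonneg (hwnn j) (Finset.sum_nonneg fun i _ => hcnn i)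
  have hg : Summable (fun j => w j * ∑ i ∈ range j, c i) := by
    refine Summable.of_nonneg_of_le hgnn (fun j => ?_) (hwsum.mul_right (Real.exp (b*x)))
    exact mul_le_mul_of_nonneg_left (hpart j) (hwnn j)
  have hf_summ : Summable (fun p : ℕ × ℕ => if p.2 < p.1 then w p.1 * c p.2 else 0) := by
    refine Summable.of_nonneg_of_le (fun p => ?_) (fun p => ?_)
      (hwsum.mul_of_nonneg hc hwnn hcnn)
    · split
      · exact mul_nonneg (hwnn _) (hcnn _)
      · exact le_rfl
    · split
      · exact le_rfl
      · exact mul_nonneg (hwnn _) (hcnn _)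
  have hswap : ∑' j, (w j * ∑ i ∈ range j, c i)
      = ∑' i, c i * (1 - ∑ m ∈ range (i+1), w m) := by
    have h1 : ∀ j : ℕ, ∑' i, (if i < j then w j * c i else 0) = w j * ∑ i ∈ range j, c i := by
      intro j
      rw [tsum_eq_sum (s := range j) (fun i hi => if_neg (by simpa using hi)), Finset.mul_sum]
      exact Finset.sum_congr rfl fun i hi => if_pos (Finset.mem_range.mp hi)
    have h2 : ∀ i : ℕ, ∑' j, (if i < j then w j * c i else 0)
        = c i * (1 - ∑ m ∈ range (i+1), w m) := by
      intro i
      have : (fun j => if i < j then w j * c i else 0) = fun j => (if i < j then w j else 0) * c i := by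
        funext j; split <;> simp
      rw [this, tsum_mul_right, hite i, mul_comm]
    calc ∑' j, (w j * ∑ i ∈ range j, c i)
        = ∑' (j) (i), (if i < j then w j * c i else 0) := by
          exact tsum_congr fun j => (h1 j).symm
      _ = ∑' (i) (j), (if i < j then w j * c i else 0) := by
          exact (Summable.tsum_comm (f := fun j i => if i < j then w j * c i else 0) hf_summ).symm
      _ = ∑' i, c i * (1 - ∑ m ∈ range (i+1), w m) := tsum_congr h2
  show ∑' j, w j * erlangCDF x j b
      = 1 - Real.exp (-(b*x)) * ∑' i, c i * (1 - ∑ m ∈ range (i+1), w m)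
  calc ∑' j, w j * erlangCDF x j b
      = ∑' j, (w j - Real.exp (-(b*x)) * (w j * ∑ i ∈ range j, c i)) := tsum_congr hterm
    _ = (∑' j, w j) - ∑' j, Real.exp (-(b*x)) * (w j * ∑ i ∈ range j, c i) :=
        Summable.tsum_sub hwsum (hg.mul_left _)
    _ = 1 - Real.exp (-(b*x)) * ∑' i, c i * (1 - ∑ m ∈ range (i+1), w m) := by
        rw [hw1, tsum_mul_left, hswap]

lemma key_comb (f : ℕ → ℝ) (n : ℕ) :
    ∑ i ∈ range (n+1+1), ((n+1).choose i : ℝ) * f i * f (n+1-i)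
      = 2 * ∑ m ∈ range (n+1), (n.choose m : ℝ) * f (m+1) * f (n-m) := by
  have hS3 : ∑ k ∈ range (n+1), (n.choose k : ℝ) * f k * f (n+1-k)
      = ∑ m ∈ range (n+1), (n.choose m : ℝ) * f (m+1) * f (n-m) := by
    rw [← Finset.sum_range_reflect]
    apply Finset.sum_congr rfl
    intro m hm
    rw [Finset.mem_range] at hm
    have hm' : m ≤ n := Nat.lt_succ_iff.mp hm
    rw [show n+1-1-m = n-m by omega, Nat.choose_symm hm', show n+1-(n-m) = m+1 by omega]
    ring
  rw [Finset.sum_range_succ' _ (n+1)]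
  have hstep : ∀ i ∈ range (n+1), ((n+1).choose (i+1) : ℝ) * f (i+1) * f (n+1-(i+1))
      = (n.choose i : ℝ) * f (i+1) * f (n-i) + (n.choose (i+1) : ℝ) * f (i+1) * f (n-i) := by
    intro i _
    have h : (n+1).choose (i+1) = n.choose i + n.choose (i+1) := Nat.choose_succ_succ n i
    rw [show n+1-(i+1) = n-i by omega, h]
    push_cast; ring
  rw [Finset.sum_congr rfl hstep, Finset.sum_add_distrib]
  have hS2 : ∑ i ∈ range (n+1), (n.choose (i+1) : ℝ) * f (i+1) * f (n-i)
        + ((n+1).choose 0 : ℝ) * f 0 * f (n+1-0)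
      = ∑ k ∈ range (n+1), (n.choose k : ℝ) * f k * f (n+1-k) := by
    rw [Finset.sum_range_succ (fun i => (n.choose (i+1) : ℝ) * f (i+1) * f (n-i)) n,
      Finset.sum_range_succ' (fun k => (n.choose k : ℝ) * f k * f (n+1-k)) n]
    simp only [Nat.choose_succ_self, Nat.cast_zero, zero_mul, add_zero, Nat.choose_zero_right,
      Nat.cast_one, one_mul, Nat.sub_zero]
    congr 1
    apply Finset.sum_congr rfl
    intro i _
    rw [show n+1-(i+1) = n-i by omega]
  rw [add_assoc, hS2, hS3]
  ring

lemma u_tendsto (a : ℕ → ℝ) (ha0 : ∀ n, 0 ≤ a n) (ha1 : ∀ n, a n ≤ 1)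
    (hmono : ∀ ⦃m n : ℕ⦄, m ≤ n → a n ≤ a m)
    (hlim : Tendsto a atTop (nhds 0)) :
    Tendsto (fun N => (1/2^N : ℝ) * ∑ i ∈ range (N+1), (N.choose i : ℝ) * a i)
      atTop (nhds 0) := by
  rw [Metric.tendsto_atTop]
  intro ε hε
  obtain ⟨k, hk⟩ : ∃ k, a k < ε/2 := by
    obtain ⟨k, hk⟩ := (Metric.tendsto_atTop.1 hlim (ε/2) (by positivity))
    exact ⟨k, by simpa [Real.dist_eq, abs_of_nonneg (ha0 k)] using hk k le_rfl⟩
  have hgeo : Tendsto (fun N : ℕ => (k:ℝ) * ((N:ℝ)+1)^k * (1/2)^N) atTop (nhds 0) := by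
    have h : Tendsto (fun n : ℕ => (n:ℝ)^k * (1/2)^n) atTop (nhds 0) :=
      (summable_pow_mul_geometric_of_norm_lt_one (R := ℝ) k (r := 1/2)
        (by rw [Real.norm_eq_abs]; rw [abs_of_nonneg]; norm_num; norm_num)).tendsto_atTop_zero
    have h2 := (h.comp (tendsto_add_atTop_nat 1)).const_mul (2*(k:ℝ))
    rw [mul_zero] at h2
    apply h2.congr
    intro N
    simp only [Function.comp_apply]
    push_cast
    ring
  obtain ⟨M₁, hM₁⟩ := Metric.tendsto_atTop.1 hgeo (ε/2) (by positivity)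
  refine ⟨max M₁ k, fun N hN => ?_⟩
  have hNM₁ : M₁ ≤ N := le_trans (le_max_left _ _) hN
  have hNk : k ≤ N := le_trans (le_max_right _ _) hN
  set u : ℝ := (1/2^N : ℝ) * ∑ i ∈ range (N+1), (N.choose i : ℝ) * a i with hu
  have hpow : (0:ℝ) < 2^N := by positivity
  have hunn : 0 ≤ u := by
    apply mul_nonneg (by positivity)
    exact Finset.sum_nonneg fun i _ => mul_nonneg (by positivity) (ha0 i)
  have hsplit : ∑ i ∈ range (N+1), (N.choose i : ℝ) * a i
      = ∑ i ∈ range k, (N.choose i : ℝ) * a i + ∑ i ∈ Ico k (N+1), (N.choose i : ℝ) * a i :=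
    (Finset.sum_range_add_sum_Ico _ (by omega)).symm
  have hb1 : ∑ i ∈ range k, (N.choose i : ℝ) * a i ≤ (k:ℝ) * ((N:ℝ)+1)^k := by
    calc ∑ i ∈ range k, (N.choose i : ℝ) * a i ≤ ∑ i ∈ range k, ((N:ℝ)+1)^k := by
          apply Finset.sum_le_sum
          intro i hi
          rw [Finset.mem_range] at hi
          have h1 : N.choose i ≤ (N+1)^k := by
            calc N.choose i ≤ N ^ i := Nat.choose_le_pow N i
              _ ≤ (N+1)^i := Nat.pow_le_pow_left (by omega) i
              _ ≤ (N+1)^k := Nat.pow_le_pow_right (by omega) (by omega)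
          calc (N.choose i : ℝ) * a i ≤ (N.choose i : ℝ) * 1 :=
                mul_le_mul_of_nonneg_left (ha1 i) (by positivity)
            _ = (N.choose i : ℝ) := mul_one _
            _ ≤ ((N:ℝ)+1)^k := by exact_mod_cast Nat.cast_le.mpr h1 |>.trans_eq (by push_cast; ring)
      _ = (k:ℝ) * ((N:ℝ)+1)^k := by rw [Finset.sum_const, Finset.card_range]; simp [nsmul_eq_mul]
  have hb2 : ∑ i ∈ Ico k (N+1), (N.choose i : ℝ) * a i ≤ a k * 2^N := by
    calc ∑ i ∈ Ico k (N+1), (N.choose i : ℝ) * a i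
        ≤ ∑ i ∈ Ico k (N+1), (N.choose i : ℝ) * a k := by
          apply Finset.sum_le_sum
          intro i hi
          rw [Finset.mem_Ico] at hi
          exact mul_le_mul_of_nonneg_left (hmono hi.1) (by positivity)
      _ ≤ ∑ i ∈ range (N+1), (N.choose i : ℝ) * a k := by
          apply Finset.sum_le_sum_of_subset_of_nonneg
          · intro i hi; rw [Finset.mem_Ico] at hi; exact Finset.mem_range.mpr hi.2
          · intro i _ _; exact mul_nonneg (by positivity) (ha0 k)
      _ = (∑ i ∈ range (N+1), (N.choose i : ℝ)) * a k := by rw [Finset.sum_mul]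
      _ = (2^N : ℝ) * a k := by
          rw [← Nat.cast_sum, Nat.sum_range_choose]
          push_cast; ring
      _ = a k * 2^N := by ring
  have hgb : (k:ℝ) * ((N:ℝ)+1)^k * (1/2)^N < ε/2 := by
    have := hM₁ N hNM₁
    rw [Real.dist_eq, sub_zero, abs_of_nonneg (by positivity)] at this
    exact this
  have hub : u < ε := by
    have : u ≤ (1/2^N) * ((k:ℝ) * ((N:ℝ)+1)^k) + a k := by
      rw [hu, hsplit, mul_add]
      gcongr
      · calc (1/2^N : ℝ) * ∑ i ∈ Ico k (N+1), (N.choose i : ℝ) * a i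
            ≤ (1/2^N : ℝ) * (a k * 2^N) := by
              apply mul_le_mul_of_nonneg_left hb2 (by positivity)
          _ = a k := by field_simp
    have heq : (1/2^N : ℝ) * ((k:ℝ) * ((N:ℝ)+1)^k) = (k:ℝ) * ((N:ℝ)+1)^k * (1/2)^N := by
      rw [div_pow, one_pow]; ring
    rw [heq] at this
    linarith
  rw [Real.dist_eq, sub_zero, abs_of_nonneg hunn]
  exact hub

lemma square_eq (y : ℝ) (hy : 0 ≤ y) (g : ℕ → ℝ) (hg0 : ∀ i, 0 ≤ g i) (hg1 : ∀ i, g i ≤ 1) :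
    (∑' i : ℕ, (y^i / i.factorial) * g i)^2
      = ∑' n : ℕ, ((2*y)^n / n.factorial) *
          ((1/2^n) * ∑ i ∈ range (n+1), (n.choose i : ℝ) * g i * g (n-i)) := by
  have hnorm : Summable (fun i : ℕ => ‖(y^i / i.factorial) * g i‖) := by
    refine Summable.of_nonneg_of_le (fun i => norm_nonneg _) (fun i => ?_)
      (Real.summable_pow_div_factorial y)
    rw [Real.norm_eq_abs, abs_of_nonneg (mul_nonneg (by positivity) (hg0 i))]
    calc (y^i / i.factorial) * g i ≤ (y^i / i.factorial) * 1 := by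
          apply mul_le_mul_of_nonneg_left (hg1 i) (by positivity)
      _ = y^i / i.factorial := mul_one _
  rw [sq, tsum_mul_tsum_eq_tsum_sum_range_of_summable_norm hnorm hnorm]
  apply tsum_congr
  intro n
  rw [Finset.mul_sum, Finset.mul_sum]
  apply Finset.sum_congr rfl
  intro k hk
  have hkn : k ≤ n := Nat.lt_succ_iff.mp (Finset.mem_range.mp hk)
  have hfact : (n.choose k : ℝ) * k.factorial * (n-k).factorial = n.factorial := by
    exact_mod_cast congrArg (Nat.cast : ℕ → ℝ) (Nat.choose_mul_factorial_mul_factorial hkn)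
  have hpow : y^k * y^(n-k) = y^n := by rw [← pow_add]; congr 1; omega
  have hkf : (k.factorial : ℝ) ≠ 0 := by positivity
  have hnkf : ((n-k).factorial : ℝ) ≠ 0 := by positivity
  have hnf : (n.factorial : ℝ) ≠ 0 := by positivity
  rw [mul_pow]
  field_simp
  rw [← hfact, ← hpow]
  ring

theorem mixedErlang_order_statistics (β : ℝ) (hβ : 0 < β)
    (q : ℕ → ℝ) (hq0 : q 0 = 0) (hq_nonneg : ∀ j, 0 ≤ q j) (hq_sum : ∑' j, q j = 1)
    (Q : ℕ → ℝ) (hQ : ∀ n, Q n = ∑ m ∈ Finset.range (n + 1), q m)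
    (qmin qmax : ℕ → ℝ) (hqmin0 : qmin 0 = 0) (hqmax0 : qmax 0 = 0)
    (hqmin : ∀ j, 1 ≤ j → qmin j
      = (1 / 2 ^ (j - 1)) * ∑ m ∈ Finset.range j,
          ((j - 1).choose m : ℝ) * q (m + 1) * (1 - Q (j - 1 - m)))
    (hqmax : ∀ j, 1 ≤ j → qmax j
      = (1 / 2 ^ (j - 1)) * ∑ m ∈ Finset.range j,
          ((j - 1).choose m : ℝ) * q (m + 1) * Q (j - 1 - m))
    (F : ℝ → ℝ) (hF : ∀ x, F x = ∑' j, q j * erlangCDF x j β) :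
    (∀ x : ℝ, 0 ≤ x →
      1 - (1 - F x) ^ 2 = ∑' j, qmin j * erlangCDF x j (2 * β)
      ∧ (F x) ^ 2 = ∑' j, qmax j * erlangCDF x j (2 * β))
    ∧ (∀ j, 0 ≤ qmin j) ∧ (∀ j, 0 ≤ qmax j)
    ∧ (∑' j, qmin j = 1) ∧ (∑' j, qmax j = 1) := by
  -- basic facts about q and Q
  have hsq : Summable q := by
    by_contra h
    rw [tsum_eq_zero_of_not_summable h] at hq_sum
    norm_num at hq_sum
  have hQ0 : Q 0 = 0 := by rw [hQ]; simpa using hq0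
  have hQnn : ∀ n, 0 ≤ Q n := fun n => by
    rw [hQ]; exact Finset.sum_nonneg fun m _ => hq_nonneg m
  have hQle1 : ∀ n, Q n ≤ 1 := fun n => by
    rw [hQ, ← hq_sum]; exact Summable.sum_le_tsum _ (fun m _ => hq_nonneg m) hsq
  have hQmono : ∀ ⦃m n : ℕ⦄, m ≤ n → Q m ≤ Q n := fun m n h => by
    rw [hQ, hQ]
    exact Finset.sum_le_sum_of_subset_of_nonneg
      (Finset.range_subset_range.2 (by omega)) fun i _ _ => hq_nonneg i
  have hqQ : ∀ m, Q (m+1) - Q m = q (m+1) := fun m => by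
    rw [hQ, hQ, Finset.sum_range_succ]; ring
  have hQlim : Tendsto Q atTop (nhds 1) := by
    have h1 := hsq.hasSum.tendsto_sum_nat
    rw [hq_sum] at h1
    have h2 := h1.comp (tendsto_add_atTop_nat 1)
    apply h2.congr
    intro n
    exact (hQ n).symm
  -- the sequences s and t
  set s : ℕ → ℝ := fun n =>
    (1/2^n : ℝ) * ∑ i ∈ range (n+1), (n.choose i : ℝ) * (1 - Q i) * (1 - Q (n-i)) with hs_def
  set t : ℕ → ℝ := fun n =>
    (1/2^n : ℝ) * ∑ i ∈ range (n+1), (n.choose i : ℝ) * Q i * Q (n-i) with ht_def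
  have hs0 : s 0 = 1 := by simp [hs_def, hQ0]
  have ht0 : t 0 = 0 := by simp [ht_def, hQ0]
  have hkey_s : ∀ n, s (n+1)
      = (1/2^n : ℝ) * ∑ m ∈ range (n+1), (n.choose m : ℝ) * (1 - Q (m+1)) * (1 - Q (n-m)) := by
    intro n
    simp only [hs_def]
    rw [key_comb (fun i => 1 - Q i) n, pow_succ]
    field_simp
  have hkey_t : ∀ n, t (n+1)
      = (1/2^n : ℝ) * ∑ m ∈ range (n+1), (n.choose m : ℝ) * Q (m+1) * Q (n-m) := by
    intro n
    simp only [ht_def]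
    rw [key_comb Q n, pow_succ]
    field_simp
  have hsdiff : ∀ n, s n - s (n+1) = qmin (n+1) := by
    intro n
    rw [hkey_s n, hqmin (n+1) (by omega)]
    simp only [Nat.add_sub_cancel, hs_def]
    rw [← mul_sub, ← Finset.sum_sub_distrib]
    congr 1
    refine Finset.sum_congr rfl fun m _ => ?_
    rw [← hqQ m]; ring
  have htdiff : ∀ n, t (n+1) - t n = qmax (n+1) := by
    intro n
    rw [hkey_t n, hqmax (n+1) (by omega)]
    simp only [Nat.add_sub_cancel, ht_def]
    rw [← mul_sub, ← Finset.sum_sub_distrib]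
    congr 1
    refine Finset.sum_congr rfl fun m _ => ?_
    rw [← hqQ m]; ring
  have hspart : ∀ N, ∑ j ∈ range (N+1), qmin j = 1 - s N := by
    intro N
    induction N with
    | zero => simp [hqmin0, hs0]
    | succ N ih => rw [Finset.sum_range_succ, ih, ← hsdiff N]; ring
  have htpart : ∀ N, ∑ j ∈ range (N+1), qmax j = t N := by
    intro N
    induction N with
    | zero => simp [hqmax0, ht0]
    | succ N ih => rw [Finset.sum_range_succ, ih, ← htdiff N]; ring
  -- nonnegativity of the new weights
  have hqmin_nn : ∀ j, 0 ≤ qmin j := by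
    intro j
    cases j with
    | zero => rw [hqmin0]
    | succ n =>
        rw [hqmin (n+1) (by omega)]
        simp only [Nat.add_sub_cancel]
        apply mul_nonneg (by positivity)
        apply Finset.sum_nonneg
        intro m _
        have h1 := hQle1 (n - m)
        have h2 := hq_nonneg (m+1)
        have h3 : (0:ℝ) ≤ (n.choose m : ℝ) := by positivity
        exact mul_nonneg (mul_nonneg h3 h2) (by linarith)
  have hqmax_nn : ∀ j, 0 ≤ qmax j := by
    intro j
    cases j with
    | zero => rw [hqmax0]
    | succ n =>
        rw [hqmax (n+1) (by omega)]
        simp only [Nat.add_sub_cancel]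
        apply mul_nonneg (by positivity)
        apply Finset.sum_nonneg
        intro m _
        have h1 := hQnn (n - m)
        have h2 := hq_nonneg (m+1)
        have h3 : (0:ℝ) ≤ (n.choose m : ℝ) := by positivity
        exact mul_nonneg (mul_nonneg h3 h2) h1
  -- limits of s and t
  have halim : Tendsto (fun n => 1 - Q n) atTop (nhds 0) := by
    have := hQlim.const_sub 1
    simpa using this
  have hu := u_tendsto (fun n => 1 - Q n) (fun n => sub_nonneg.2 (hQle1 n))
    (fun n => sub_le_self 1 (hQnn n)) (fun m n h => sub_le_sub_left (hQmono h) 1) halim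
  have hu' : Tendsto (fun N => (1/2^N : ℝ) * ∑ i ∈ range (N+1), (N.choose i : ℝ) * (1 - Q i))
      atTop (nhds 0) := hu
  have hchoose1 : ∀ N : ℕ, (1/2^N : ℝ) * ∑ i ∈ range (N+1), (N.choose i : ℝ) = 1 := by
    intro N
    rw [← Nat.cast_sum, Nat.sum_range_choose]
    push_cast
    field_simp
  have hs_nn : ∀ N, 0 ≤ s N := by
    intro N
    simp only [hs_def]
    apply mul_nonneg (by positivity)
    apply Finset.sum_nonneg
    intro i _
    have h1 := hQle1 i; have h2 := hQle1 (N - i)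
    have h3 : (0:ℝ) ≤ (N.choose i : ℝ) := by positivity
    exact mul_nonneg (mul_nonneg h3 (by linarith)) (by linarith)
  have hs_le_u : ∀ N, s N ≤ (1/2^N : ℝ) * ∑ i ∈ range (N+1), (N.choose i : ℝ) * (1 - Q i) := by
    intro N
    simp only [hs_def]
    apply mul_le_mul_of_nonneg_left _ (by positivity)
    apply Finset.sum_le_sum
    intro i _
    have h1 := hQle1 i; have h2 := hQle1 (N-i); have h3 := hQnn (N-i)
    have h4 : (0:ℝ) ≤ (N.choose i : ℝ) := by positivity
    have h5 : (0:ℝ) ≤ (N.choose i : ℝ) * (1 - Q i) := mul_nonneg h4 (by linarith)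
    calc (N.choose i : ℝ) * (1 - Q i) * (1 - Q (N-i))
        ≤ (N.choose i : ℝ) * (1 - Q i) * 1 := mul_le_mul_of_nonneg_left (by linarith) h5
      _ = (N.choose i : ℝ) * (1 - Q i) := mul_one _
  have hslim : Tendsto s atTop (nhds 0) := squeeze_zero hs_nn hs_le_u hu'
  have ht_nn : ∀ N, 0 ≤ t N := by
    intro N
    simp only [ht_def]
    apply mul_nonneg (by positivity)
    apply Finset.sum_nonneg
    intro i _
    have h1 := hQnn i; have h2 := hQnn (N - i)
    have h3 : (0:ℝ) ≤ (N.choose i : ℝ) := by positivity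
    positivity
  have ht_le1 : ∀ N, t N ≤ 1 := by
    intro N
    rw [← hchoose1 N]
    simp only [ht_def]
    apply mul_le_mul_of_nonneg_left _ (by positivity)
    apply Finset.sum_le_sum
    intro i _
    have h1 := hQnn i; have h2 := hQnn (N-i); have h3 := hQle1 i; have h4 := hQle1 (N-i)
    have h5 : (0:ℝ) ≤ (N.choose i : ℝ) := by positivity
    have e1 : (N.choose i : ℝ) * Q i * Q (N-i) ≤ (N.choose i : ℝ) * Q i * 1 :=
      mul_le_mul_of_nonneg_left h4 (mul_nonneg h5 h1)
    have e2 : (N.choose i : ℝ) * Q i ≤ (N.choose i : ℝ) * 1 :=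
      mul_le_mul_of_nonneg_left h3 h5
    nlinarith
  have hrefl : ∀ N, ∑ i ∈ range (N+1), (N.choose i : ℝ) * (1 - Q (N-i))
      = ∑ i ∈ range (N+1), (N.choose i : ℝ) * (1 - Q i) := by
    intro N
    rw [← Finset.sum_range_reflect]
    apply Finset.sum_congr rfl
    intro i hi
    rw [Finset.mem_range] at hi
    have hi' : i ≤ N := by omega
    rw [show N+1-1-i = N-i by omega, Nat.choose_symm hi', show N-(N-i) = i by omega]
  have htlow : ∀ N, 1 - 2 * ((1/2^N : ℝ) * ∑ i ∈ range (N+1), (N.choose i : ℝ) * (1 - Q i))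
      ≤ t N := by
    intro N
    have hsum_le : ∑ i ∈ range (N+1), ((N.choose i : ℝ) - (N.choose i : ℝ) * Q i * Q (N-i))
        ≤ ∑ i ∈ range (N+1), ((N.choose i : ℝ) * (1 - Q i) + (N.choose i : ℝ) * (1 - Q (N-i))) := by
      apply Finset.sum_le_sum
      intro i _
      have h1 := hQnn i; have h2 := hQnn (N-i); have h3 := hQle1 i; have h4 := hQle1 (N-i)
      have h5 : (0:ℝ) ≤ (N.choose i : ℝ) := by positivity
      nlinarith [mul_nonneg h5 (mul_nonneg (by linarith : (0:ℝ) ≤ 1 - Q i)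
        (by linarith : (0:ℝ) ≤ 1 - Q (N-i)))]
    have hexp : (1/2^N : ℝ) * ∑ i ∈ range (N+1), ((N.choose i : ℝ) - (N.choose i : ℝ) * Q i * Q (N-i))
        = 1 - t N := by
      rw [Finset.sum_sub_distrib, mul_sub, hchoose1 N]
    have hexp2 : (1/2^N : ℝ) * ∑ i ∈ range (N+1),
          ((N.choose i : ℝ) * (1 - Q i) + (N.choose i : ℝ) * (1 - Q (N-i)))
        = 2 * ((1/2^N : ℝ) * ∑ i ∈ range (N+1), (N.choose i : ℝ) * (1 - Q i)) := by
      rw [Finset.sum_add_distrib, hrefl N]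
      ring
    have h6 : (1 - t N : ℝ)
        ≤ 2 * ((1/2^N : ℝ) * ∑ i ∈ range (N+1), (N.choose i : ℝ) * (1 - Q i)) := by
      rw [← hexp, ← hexp2]
      apply mul_le_mul_of_nonneg_left hsum_le (by positivity)
    linarith
  have htlim : Tendsto t atTop (nhds 1) := by
    have hlower : Tendsto (fun N => 1 - 2 * ((1/2^N : ℝ) *
        ∑ i ∈ range (N+1), (N.choose i : ℝ) * (1 - Q i))) atTop (nhds 1) := by
      have := (hu'.const_mul 2).const_sub 1
      simpa using this
    exact tendsto_of_tendsto_of_tendsto_of_le_of_le hlower tendsto_const_nhds htlow ht_le1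
  -- summability and total mass of the new weights
  have hqmin_sum : Summable qmin := by
    apply summable_of_sum_range_le (c := 1) hqmin_nn
    intro n
    cases n with
    | zero => norm_num
    | succ n =>
        rw [hspart n]
        linarith [hs_nn n]
  have hqmin_tsum : ∑' j, qmin j = 1 := by
    have h1 := hqmin_sum.hasSum.tendsto_sum_nat
    have h2 : Tendsto (fun N => ∑ j ∈ range N, qmin j) atTop (nhds 1) := by
      rw [← tendsto_add_atTop_iff_nat 1]
      have h3 : Tendsto (fun N => 1 - s N) atTop (nhds 1) := by
        have := hslim.const_sub 1
        simpa using this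
      apply h3.congr
      intro N
      exact (hspart N).symm
    exact tendsto_nhds_unique h1 h2
  have hqmax_sum : Summable qmax := by
    apply summable_of_sum_range_le (c := 1) hqmax_nn
    intro n
    cases n with
    | zero => norm_num
    | succ n =>
        rw [htpart n]
        exact ht_le1 n
  have hqmax_tsum : ∑' j, qmax j = 1 := by
    have h1 := hqmax_sum.hasSum.tendsto_sum_nat
    have h2 : Tendsto (fun N => ∑ j ∈ range N, qmax j) atTop (nhds 1) := by
      rw [← tendsto_add_atTop_iff_nat 1]
      apply htlim.congr
      intro N
      exact (htpart N).symm
    exact tendsto_nhds_unique h1 h2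
  refine ⟨fun x hx => ?_, hqmin_nn, hqmax_nn, hqmin_tsum, hqmax_tsum⟩
  -- now the distributional identities at a fixed x ≥ 0
  have hbx : 0 ≤ β * x := mul_nonneg hβ.le hx
  have hcsum : Summable (fun i : ℕ => (β*x)^i / i.factorial) :=
    Real.summable_pow_div_factorial _
  have hcnn : ∀ i : ℕ, 0 ≤ (β*x)^i / (i.factorial : ℝ) := fun i => by positivity
  have hFxq : F x = 1 - Real.exp (-(β*x)) * ∑' i : ℕ, ((β*x)^i / i.factorial) * (1 - Q i) := by
    have hmt := mixed_tsum β x hβ.le hx q hq0 hq_nonneg hsq hq_sum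
    have hcg : ∑' i : ℕ, ((β*x)^i / i.factorial) * (1 - ∑ m ∈ range (i+1), q m)
        = ∑' i : ℕ, ((β*x)^i / i.factorial) * (1 - Q i) :=
      tsum_congr fun i => by rw [hQ]
    rw [hF x, hmt, hcg]
  have hca : Summable (fun i : ℕ => ((β*x)^i / i.factorial) * (1 - Q i)) := by
    refine Summable.of_nonneg_of_le (fun i => ?_) (fun i => ?_) hcsum
    · exact mul_nonneg (hcnn i) (by linarith [hQle1 i])
    · calc ((β*x)^i / i.factorial) * (1 - Q i) ≤ ((β*x)^i / i.factorial) * 1 :=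
            mul_le_mul_of_nonneg_left (by linarith [hQnn i]) (hcnn i)
        _ = (β*x)^i / i.factorial := mul_one _
  have hcQ : Summable (fun i : ℕ => ((β*x)^i / i.factorial) * Q i) := by
    refine Summable.of_nonneg_of_le (fun i => ?_) (fun i => ?_) hcsum
    · exact mul_nonneg (hcnn i) (hQnn i)
    · calc ((β*x)^i / i.factorial) * Q i ≤ ((β*x)^i / i.factorial) * 1 :=
            mul_le_mul_of_nonneg_left (hQle1 i) (hcnn i)
        _ = (β*x)^i / i.factorial := mul_one _
  have hXY : (∑' i : ℕ, ((β*x)^i / i.factorial) * (1 - Q i))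
      + (∑' i : ℕ, ((β*x)^i / i.factorial) * Q i) = Real.exp (β*x) := by
    rw [← Summable.tsum_add hca hcQ, ← exp_tsum (β*x)]
    exact tsum_congr fun i => by ring
  have hee : Real.exp (-(β*x)) * Real.exp (β*x) = 1 := by
    rw [← Real.exp_add]; simp
  have hFmax : F x = Real.exp (-(β*x)) * ∑' i : ℕ, ((β*x)^i / i.factorial) * Q i := by
    have h3 : Real.exp (-(β*x)) * (∑' i : ℕ, ((β*x)^i / i.factorial) * (1 - Q i))
        + Real.exp (-(β*x)) * (∑' i : ℕ, ((β*x)^i / i.factorial) * Q i) = 1 := by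
      rw [← mul_add, hXY, hee]
    rw [hFxq]
    linarith
  have h1F : 1 - F x = Real.exp (-(β*x)) * ∑' i : ℕ, ((β*x)^i / i.factorial) * (1 - Q i) := by
    rw [hFxq]; ring
  have hE2 : Real.exp (-(β*x))^2 = Real.exp (-(2*(β*x))) := by
    rw [sq, ← Real.exp_add]
    congr 1
    ring
  have hEE : Real.exp (-(2*(β*x))) * Real.exp (2*(β*x)) = 1 := by
    rw [← Real.exp_add]; simp
  have hCsum : Summable (fun i : ℕ => (2*(β*x))^i / i.factorial) :=
    Real.summable_pow_div_factorial _
  have hCnn : ∀ i : ℕ, 0 ≤ (2*(β*x))^i / (i.factorial : ℝ) := fun i => by positivity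
  constructor
  · -- minimum
    have hsqmin : (∑' i : ℕ, ((β*x)^i / i.factorial) * (1 - Q i))^2
        = ∑' n : ℕ, ((2*(β*x))^n / n.factorial) *
            ((1/2^n : ℝ) * ∑ i ∈ range (n+1), (n.choose i : ℝ) * (1 - Q i) * (1 - Q (n-i))) :=
      square_eq (β*x) hbx (fun i => 1 - Q i)
        (fun i => sub_nonneg.2 (hQle1 i)) (fun i => sub_le_self 1 (hQnn i))
    have hfold : ∑' n : ℕ, ((2*(β*x))^n / n.factorial) *
          ((1/2^n : ℝ) * ∑ i ∈ range (n+1), (n.choose i : ℝ) * (1 - Q i) * (1 - Q (n-i)))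
        = ∑' n : ℕ, ((2*(β*x))^n / n.factorial) * s n := by
      simp only [hs_def]
    have hmt := mixed_tsum (2*β) x (by positivity) hx qmin hqmin0 hqmin_nn hqmin_sum hqmin_tsum
    simp only [mul_assoc] at hmt
    have hrw : ∑' i : ℕ, ((2*(β*x))^i / i.factorial) * (1 - ∑ m ∈ range (i+1), qmin m)
        = ∑' i : ℕ, ((2*(β*x))^i / i.factorial) * s i := by
      refine tsum_congr fun i => ?_
      rw [hspart i, sub_sub_cancel]
    rw [hmt, hrw, h1F, mul_pow, hE2, hsqmin, hfold]
  · -- maximum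
    have hsqmax : (∑' i : ℕ, ((β*x)^i / i.factorial) * Q i)^2
        = ∑' n : ℕ, ((2*(β*x))^n / n.factorial) *
            ((1/2^n : ℝ) * ∑ i ∈ range (n+1), (n.choose i : ℝ) * Q i * Q (n-i)) :=
      square_eq (β*x) hbx Q hQnn hQle1
    have hfold : ∑' n : ℕ, ((2*(β*x))^n / n.factorial) *
          ((1/2^n : ℝ) * ∑ i ∈ range (n+1), (n.choose i : ℝ) * Q i * Q (n-i))
        = ∑' n : ℕ, ((2*(β*x))^n / n.factorial) * t n := by
      simp only [ht_def]
    have hmt := mixed_tsum (2*β) x (by positivity) hx qmax hqmax0 hqmax_nn hqmax_sum hqmax_tsum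
    simp only [mul_assoc] at hmt
    have hrw : ∑' i : ℕ, ((2*(β*x))^i / i.factorial) * (1 - ∑ m ∈ range (i+1), qmax m)
        = ∑' i : ℕ, ((2*(β*x))^i / i.factorial) * (1 - t i) :=
      tsum_congr fun i => by rw [htpart i]
    have hCt : Summable (fun i : ℕ => ((2*(β*x))^i / i.factorial) * t i) := by
      refine Summable.of_nonneg_of_le (fun i => ?_) (fun i => ?_) hCsum
      · exact mul_nonneg (hCnn i) (ht_nn i)
      · calc ((2*(β*x))^i / i.factorial) * t i ≤ ((2*(β*x))^i / i.factorial) * 1 :=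
              mul_le_mul_of_nonneg_left (ht_le1 i) (hCnn i)
          _ = (2*(β*x))^i / i.factorial := mul_one _
    have hsplitC : ∑' i : ℕ, ((2*(β*x))^i / i.factorial) * (1 - t i)
        = Real.exp (2*(β*x)) - ∑' i : ℕ, ((2*(β*x))^i / i.factorial) * t i := by
      calc ∑' i : ℕ, ((2*(β*x))^i / i.factorial) * (1 - t i)
          = ∑' i : ℕ, ((2*(β*x))^i / i.factorial - ((2*(β*x))^i / i.factorial) * t i) :=
            tsum_congr fun i => by ring
        _ = (∑' i : ℕ, (2*(β*x))^i / i.factorial)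
              - ∑' i : ℕ, ((2*(β*x))^i / i.factorial) * t i := Summable.tsum_sub hCsum hCt
        _ = Real.exp (2*(β*x)) - ∑' i : ℕ, ((2*(β*x))^i / i.factorial) * t i := by
            rw [exp_tsum]
    rw [hmt, hrw, hsplitC, mul_sub, hEE, hFmax, mul_pow, hE2, hsqmax, hfold]
    ring
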